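/- If C > 0 satisfies Φ(C) = p_1^0 (b_1 − α) C^{d_1} + p_2^0 (b_2 − α) C^{d_2} = 0 with b_1 ≠ b_2, p_1^0, p_2^0 > 0, then the limit frequencies p_1^∞ = p_1^0 C^{d_1}/(p_1^0 C^{d_1} + p_2^0 C^{d_2}) and p_2^∞ = p_2^0 C^{d_2}/(p_1^0 C^{d_1} + p_2^0 C^{d_2}) equal p_1^∞ = (α − b_2)/(b_1 − b_2) and p_2^∞ = (α − b_1)/(b_2 − b_1), independently of the initial weights p_1^0, p_2^0; moreover Φ has a positive root if and only if α lies strictly between b_1 and b_2 (given d_1 ≠ d_2). -/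

import Mathlib

/-- If `C > 0` is a root of `Φ(C) = p₁⁰(b₁−α)C^{d₁} + p₂⁰(b₂−α)C^{d₂}`, then
the limit frequencies `p₁^∞ = p₁⁰C^{d₁}/(p₁⁰C^{d₁}+p₂⁰C^{d₂})` and
`p₂^∞ = p₂⁰C^{d₂}/(p₁⁰C^{d₁}+p₂⁰C^{d₂})` equal `(α−b₂)/(b₁−b₂)` and
`(α−b₁)/(b₂−b₁)`, independently of `p₁⁰, p₂⁰`; moreover (for `d₁ ≠ d₂`) `Φ` has
a positive root iff `α` lies strictly between `b₁` and `b₂`. -/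
theorem two_species_limit_equilibrium
    (b1 b2 α d1 d2 p10 p20 : ℝ) (hb : b1 ≠ b2) (hd : d1 ≠ d2)
    (hd1 : 0 ≤ d1) (hd2 : 0 ≤ d2) (hp1 : 0 < p10) (hp2 : 0 < p20) :
    (∀ C : ℝ, 0 < C → p10 * (b1 - α) * C ^ d1 + p20 * (b2 - α) * C ^ d2 = 0 →
      p10 * C ^ d1 / (p10 * C ^ d1 + p20 * C ^ d2) = (α - b2) / (b1 - b2) ∧
      p20 * C ^ d2 / (p10 * C ^ d1 + p20 * C ^ d2) = (α - b1) / (b2 - b1)) ∧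
    ((∃ C : ℝ, 0 < C ∧ p10 * (b1 - α) * C ^ d1 + p20 * (b2 - α) * C ^ d2 = 0) ↔
      (b1 < α ∧ α < b2) ∨ (b2 < α ∧ α < b1)) := by
  constructor
  · intro C hC heq
    set x := p10 * C ^ d1 with hx
    set y := p20 * C ^ d2 with hy
    have hxpos : 0 < x := mul_pos hp1 (Real.rpow_pos_of_pos hC d1)
    have hypos : 0 < y := mul_pos hp2 (Real.rpow_pos_of_pos hC d2)
    have hsum : 0 < x + y := by linarith
    have heq' : x * (b1 - α) + y * (b2 - α) = 0 := by
      rw [hx, hy]; ring_nf; ring_nf at heq; linarith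
    have hb12 : b1 - b2 ≠ 0 := sub_ne_zero.mpr hb
    have hb21 : b2 - b1 ≠ 0 := sub_ne_zero.mpr (Ne.symm hb)
    constructor
    · rw [div_eq_div_iff hsum.ne' hb12]
      nlinarith [heq']
    · rw [div_eq_div_iff hsum.ne' hb21]
      nlinarith [heq']
  · constructor
    · rintro ⟨C, hC, heq⟩
      have hxpos : 0 < p10 * C ^ d1 := mul_pos hp1 (Real.rpow_pos_of_pos hC d1)
      have hypos : 0 < p20 * C ^ d2 := mul_pos hp2 (Real.rpow_pos_of_pos hC d2)
      rcases lt_trichotomy b1 α with h1 | h1 | h1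
      · left
        refine ⟨h1, ?_⟩
        by_contra h
        push_neg at h
        nlinarith
      · exfalso
        have hpow2 := Real.rpow_pos_of_pos hC d2
        have h2 : b2 = b1 := by
          rw [← h1] at heq
          have h3 : p20 * (b2 - b1) * C ^ d2 = 0 := by linear_combination heq
          rcases mul_eq_zero.mp h3 with h' | h'
          · rcases mul_eq_zero.mp h' with h'' | h''
            · exact absurd h'' hp2.ne'
            · linarith
          · exact absurd h' hpow2.ne'
        exact hb h2.symm
      · right
        constructor
        · by_contra h
          push_neg at h
          nlinarith
        · exact h1
    · intro h
      have hden : p10 * (b1 - α) ≠ 0 ∧ 0 < p20 * (α - b2) / (p10 * (b1 - α)) := by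
        rcases h with ⟨h1, h2⟩ | ⟨h1, h2⟩
        · have hn : p20 * (α - b2) < 0 := by nlinarith
          have hd' : p10 * (b1 - α) < 0 := by nlinarith
          exact ⟨hd'.ne, div_pos_of_neg_of_neg hn hd'⟩
        · have hn : 0 < p20 * (α - b2) := by nlinarith
          have hd' : 0 < p10 * (b1 - α) := by nlinarith
          exact ⟨hd'.ne', div_pos hn hd'⟩
      obtain ⟨hne, hr⟩ := hden
      set r := p20 * (α - b2) / (p10 * (b1 - α)) with hrdef
      have htd : d1 - d2 ≠ 0 := sub_ne_zero.mpr hd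
      set C := r ^ ((1 : ℝ) / (d1 - d2)) with hCdef
      have hC : 0 < C := Real.rpow_pos_of_pos hr _
      have hCpow : C ^ (d1 - d2) = r := by
        rw [hCdef, ← Real.rpow_mul hr.le, one_div_mul_cancel htd, Real.rpow_one]
      refine ⟨C, hC, ?_⟩
      have hsplit : C ^ d1 = C ^ (d1 - d2) * C ^ d2 := by
        rw [← Real.rpow_add hC]; ring_nf
      have hPr : p10 * (b1 - α) * r = p20 * (α - b2) := by
        rw [hrdef, mul_div_assoc]
        field_simp
        exact mul_div_cancel_left₀ _ (right_ne_zero_of_mul hne)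
      rw [hsplit, hCpow]
      have := Real.rpow_pos_of_pos hC d2
      nlinarith [hPr, this]
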